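/- Suppose s | g and there exists a (g, {K₀,…,K_{M−1}}, 1)-BNCDP of size u, say B = {B₀,…,B_{M−1}}, such that for each j the set of all elements of the base blocks of B_j is a complete system of representatives for the cosets of sZ_g in Z_g. Then there exists a partition-type (g, {K₀,…,K_{M−1}}, g/s)-BNCDP of size gu/s, say D, such that d_i^D ≥ is for all 1 ≤ i ≤ g/s. -/

import Mathlib

open scoped Classical

/-- The multiset of all elements of the base blocks of a family `B`. -/
def blockElems {n u : ℕ} (B : Fin u → Finset (ZMod n)) : Multiset (ZMod n) :=
  ∑ i : Fin u, (B i).val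

/-- The multiset of internal differences `Δ(B)`. -/
def deltaList {n u : ℕ} (B : Fin u → Finset (ZMod n)) : Multiset (ZMod n) :=
  ∑ i : Fin u, (((B i) ×ˢ (B i)).filter (fun p => p.1 ≠ p.2)).val.map (fun p => p.1 - p.2)

/-- The multiset of external differences `Δ_E(B, B')`. -/
def deltaE {n u : ℕ} (B B' : Fin u → Finset (ZMod n)) : Multiset (ZMod n) :=
  ∑ i : Fin u, ((B i) ×ˢ (B' i)).val.map (fun p => p.2 - p.1)

/-- `x` is a multiple of `d` in `ZMod n`, i.e. `x ∈ d·Z_n`. -/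
def inSub (n d : ℕ) (x : ZMod n) : Prop := ∃ y : ZMod n, x = (d : ZMod n) * y

/-- The multiset `T` is a complete system of representatives for the cosets of
`d·Z_n` in `Z_n`: each coset contains exactly one element of `T`
(counted with multiplicity). -/
def IsCSR (n d : ℕ) (T : Multiset (ZMod n)) : Prop :=
  ∀ x : ZMod n, Multiset.card (T.filter (fun t => inSub n d (x - t))) = 1

/-- `B` is an `(n, K, λ)`-CDP. -/
def IsCDP (n u lam : ℕ) (K : Set ℕ) (B : Fin u → Finset (ZMod n)) : Prop :=
  (∀ i, (B i).card ∈ K) ∧ ∀ x : ZMod n, x ≠ 0 → (deltaList B).count x ≤ lam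

/-- `B` is an `(n, {K₀,…,K_{M−1}}, λ)`-BNCDP of size `u`. -/
def IsBNCDP (n M u lam : ℕ) (K : Fin M → Set ℕ)
    (B : Fin M → Fin u → Finset (ZMod n)) : Prop :=
  (∀ j, IsCDP n u lam (K j) (B j)) ∧
  ∀ j j' : Fin M, j ≠ j' → ∀ x : ZMod n, (deltaE (B j) (B j')).count x ≤ lam

/-- `B` is an `(n, g, K, 1)`-CRDP (relative to the subgroup `H = (n/g)·Z_n` of order `g`). -/
def IsCRDP (n g u : ℕ) (K : Set ℕ) (B : Fin u → Finset (ZMod n)) : Prop :=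
  (∀ i, (B i).card ∈ K) ∧
  (∀ x : ZMod n, inSub n (n / g) x → (deltaList B).count x = 0) ∧
  (∀ x : ZMod n, (deltaList B).count x ≤ 1)

/-- `B` is an `(n, g, {K₀,…,K_{M−1}}, 1)`-BNCRDP of size `u`. -/
def IsBNCRDP (n g M u : ℕ) (K : Fin M → Set ℕ)
    (B : Fin M → Fin u → Finset (ZMod n)) : Prop :=
  (∀ j, IsCRDP n g u (K j) (B j)) ∧
  ∀ j j' : Fin M, j ≠ j' →
    (∀ x : ZMod n, inSub n (n / g) x → (deltaE (B j) (B j')).count x = 0) ∧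
    (∀ x : ZMod n, (deltaE (B j) (B j')).count x ≤ 1)

/-- The base blocks of `B` partition `Z_n`. -/
def IsPartitionType {n u : ℕ} (B : Fin u → Finset (ZMod n)) : Prop :=
  (∀ i i' : Fin u, i ≠ i' → Disjoint (B i) (B i')) ∧ ∀ x : ZMod n, ∃ i, x ∈ B i

/-- The `i`-apart difference list `Δ_i` of the finite set `D ⊆ Z_n`, listed in
increasing order of least nonnegative residues, indices taken cyclically and the
differences `a_{k+i} − a_k` taken as least positive residues modulo `n`
(a zero difference counts as `n`). -/
def cyclicDiffs (n i : ℕ) (D : Finset (ZMod n)) : Multiset ℕ :=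
  let L := (D.val.map ZMod.val).sort (· ≤ ·)
  (Multiset.range L.length).map (fun k =>
    let d := (L.getD ((k + i) % L.length) 0 + n - L.getD k 0) % n
    if d = 0 then n else d)

/-- `D_{(j,j')}(τ) = {a : (a, a+τ) ∈ B_i^j × B_i^{j'} for some i}`. -/
def DSet {n M u : ℕ} (B : Fin M → Fin u → Finset (ZMod n)) (j j' : Fin M)
    (τ : ZMod n) : Finset (ZMod n) :=
  Finset.univ.biUnion fun i : Fin u => (B j i).filter (fun a => a + τ ∈ B j' i)

/-- `d_i^B ≥ bound`: the minimum of `{n} ∪ Δ_i(D_{(j,j')}(τ))` over all pairs `(j,j')`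
(with `τ ≠ 0` required when `j = j'`) is at least `bound`. -/
def DBound {n M u : ℕ} (B : Fin M → Fin u → Finset (ZMod n)) (i bound : ℕ) : Prop :=
  bound ≤ n ∧ ∀ j j' : Fin M, ∀ τ : ZMod n, (j = j' → τ ≠ 0) →
    ∀ z ∈ cyclicDiffs n i (DSet B j j' τ), bound ≤ z

/-! ### Auxiliary machinery -/

section Aux

/-- Translation of a finset of `ZMod g` by `c`. -/
def tr {g : ℕ} (c : ZMod g) (A : Finset (ZMod g)) : Finset (ZMod g) :=
  A.map ⟨fun x => x + c, add_left_injective c⟩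

lemma mem_tr {g : ℕ} {c x : ZMod g} {A : Finset (ZMod g)} :
    x ∈ tr c A ↔ x - c ∈ A := by
  constructor
  · rintro h
    rcases Finset.mem_map.mp h with ⟨b, hb, rfl⟩
    simpa using hb
  · intro h
    exact Finset.mem_map.mpr ⟨x - c, h, by simp⟩

lemma tr_val {g : ℕ} (c : ZMod g) (A : Finset (ZMod g)) :
    (tr c A).val = A.val.map (fun x => x + c) :=
  Finset.map_val _ _

lemma tr_card {g : ℕ} (c : ZMod g) (A : Finset (ZMod g)) :
    (tr c A).card = A.card := Finset.card_map _

lemma count_map_addRight {g : ℕ} (v : Multiset (ZMod g)) (c x : ZMod g) :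
    (v.map (fun b => b + c)).count x = v.count (x - c) := by
  have h := Multiset.count_map_eq_count' (fun b => b + c) v
    (add_left_injective c) (x - c)
  simpa using h

lemma phi_lt {s g t : ℕ} (hs : 0 < s) (ht : t < g / s) (hsg : s ∣ g) : s * t < g := by
  have hsm : s * (g / s) = g := Nat.mul_div_cancel' hsg
  calc s * t < s * (g / s) := by exact (Nat.mul_lt_mul_left hs).mpr ht
  _ = g := hsm

lemma phi_inj {g s : ℕ} (hg : 0 < g) (hs : 0 < s) (hsg : s ∣ g) {t t' : ℕ}
    (ht : t < g / s) (ht' : t' < g / s)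
    (h : ((s * t : ℕ) : ZMod g) = ((s * t' : ℕ) : ZMod g)) : t = t' := by
  haveI : NeZero g := ⟨hg.ne'⟩
  have h2 := congrArg ZMod.val h
  rw [ZMod.val_natCast, ZMod.val_natCast, Nat.mod_eq_of_lt (phi_lt hs ht hsg),
    Nat.mod_eq_of_lt (phi_lt hs ht' hsg)] at h2
  exact Nat.eq_of_mul_eq_mul_left hs h2

lemma inSub_phi {g s : ℕ} (t : ℕ) : inSub g s ((s * t : ℕ) : ZMod g) :=
  ⟨(t : ℕ), by push_cast; ring⟩

lemma inSub_iff {g s : ℕ} (hg : 0 < g) (hs : 0 < s) (hsg : s ∣ g) (x : ZMod g) :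
    inSub g s x ↔ ∃ t : ℕ, t < g / s ∧ x = ((s * t : ℕ) : ZMod g) := by
  haveI : NeZero g := ⟨hg.ne'⟩
  have hm : 0 < g / s := Nat.div_pos (Nat.le_of_dvd hg hsg) hs
  constructor
  · rintro ⟨y, rfl⟩
    refine ⟨y.val % (g / s), Nat.mod_lt _ hm, ?_⟩
    have hsm : s * (g / s) = g := Nat.mul_div_cancel' hsg
    obtain ⟨q, hq⟩ : ∃ q, y.val = (g / s) * q + y.val % (g / s) :=
      ⟨y.val / (g / s), (Nat.div_add_mod _ _).symm⟩
    calc (s : ZMod g) * y = ((s : ℕ) : ZMod g) * ((y.val : ℕ) : ZMod g) := by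
          rw [ZMod.natCast_rightInverse y]
    _ = ((s * y.val : ℕ) : ZMod g) := by push_cast; ring
    _ = ((g * q + s * (y.val % (g / s)) : ℕ) : ZMod g) := by
          have hq2 : s * y.val = g * q + s * (y.val % (g / s)) := by
            conv_lhs => rw [hq]
            rw [Nat.mul_add, ← Nat.mul_assoc, hsm]
          rw [hq2]
    _ = ((s * (y.val % (g / s)) : ℕ) : ZMod g) := by
          push_cast [ZMod.natCast_self]; ring
  · rintro ⟨t, _, rfl⟩
    exact inSub_phi t

lemma val_add_phi {g s : ℕ} (hg : 0 < g) (hsg : s ∣ g) (y : ZMod g) (t : ℕ) :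
    (y + ((s * t : ℕ) : ZMod g)).val % s = y.val % s := by
  haveI : NeZero g := ⟨hg.ne'⟩
  rw [ZMod.val_add, ZMod.val_natCast, Nat.mod_mod_of_dvd _ hsg, Nat.add_mod,
    Nat.mod_mod_of_dvd _ hsg, Nat.mul_mod_right, Nat.add_zero, Nat.mod_mod]

/-- The coset `{x : x.val % s = r}` as a finset. -/
def cosetFin (g s r : ℕ) [NeZero g] : Finset (ZMod g) :=
  Finset.univ.filter (fun x : ZMod g => x.val % s = r)

lemma mem_cosetFin {g s r : ℕ} [NeZero g] {x : ZMod g} :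
    x ∈ cosetFin g s r ↔ x.val % s = r := by
  simp [cosetFin]

lemma cosetFin_card_le {g s r : ℕ} [NeZero g] (hg : 0 < g) (hs : 0 < s) (hsg : s ∣ g) :
    (cosetFin g s r).card ≤ g / s := by
  have hsm : s * (g / s) = g := Nat.mul_div_cancel' hsg
  have := Finset.card_le_card_of_injOn (f := fun x : ZMod g => x.val / s)
    (s := cosetFin g s r) (t := Finset.range (g / s))
    (fun x _ => by
      rw [Finset.mem_coe, Finset.mem_range]
      have hx : x.val < g := x.val_lt
      have h' : (g / s) * s = g := by rw [mul_comm]; exact hsm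
      exact Nat.div_lt_of_lt_mul (by omega))
    (fun x hx y hy hxy => by
      apply ZMod.val_injective
      rw [Finset.mem_coe, mem_cosetFin] at hx hy
      have h1 := Nat.div_add_mod x.val s
      have h2 := Nat.div_add_mod y.val s
      simp only at hxy
      have h3 : s * (x.val / s) = s * (y.val / s) := by rw [hxy]
      omega)
  simpa using this

lemma image_add_phi {g s : ℕ} [NeZero g] (hg : 0 < g) (hs : 0 < s) (hsg : s ∣ g)
    (y : ZMod g) :
    Finset.image (fun t : Fin (g / s) => y + ((s * (t : ℕ) : ℕ) : ZMod g)) Finset.univ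
      = cosetFin g s (y.val % s) := by
  apply Finset.eq_of_subset_of_card_le
  · intro x hx
    rcases Finset.mem_image.mp hx with ⟨t, _, rfl⟩
    rw [mem_cosetFin]
    exact val_add_phi hg hsg y t
  · have hinj : Function.Injective
        (fun t : Fin (g / s) => y + ((s * (t : ℕ) : ℕ) : ZMod g)) := by
      intro t t' h
      simp only [add_right_inj] at h
      exact Fin.ext (phi_inj hg hs hsg t.isLt t'.isLt h)
    rw [Finset.card_image_of_injective _ hinj, Finset.card_univ, Fintype.card_fin]
    exact cosetFin_card_le hg hs hsg

lemma cosetFin_image_val {g s r : ℕ} [NeZero g] (hg : 0 < g) (hs : 0 < s) (hsg : s ∣ g)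
    (hr : r < s) :
    (cosetFin g s r).image ZMod.val = (Finset.range (g / s)).image (fun k => r + s * k) := by
  have hsm : s * (g / s) = g := Nat.mul_div_cancel' hsg
  ext n
  simp only [Finset.mem_image, Finset.mem_range]
  constructor
  · rintro ⟨x, hx, rfl⟩
    rw [mem_cosetFin] at hx
    refine ⟨x.val / s, ?_, ?_⟩
    · have hlt := x.val_lt
      have h' : (g / s) * s = g := by rw [mul_comm]; exact hsm
      exact Nat.div_lt_of_lt_mul (by omega)
    · have := Nat.div_add_mod x.val s
      omega
  · rintro ⟨k, hk, rfl⟩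
    refine ⟨((r + s * k : ℕ) : ZMod g), ?_, ?_⟩
    · have h6 : s * k + s ≤ s * (g / s) := by
        calc s * k + s = s * (k + 1) := by ring
        _ ≤ s * (g / s) := Nat.mul_le_mul_left s (by omega)
      have hlt : r + s * k < g := by omega
      rw [mem_cosetFin, ZMod.val_natCast, Nat.mod_eq_of_lt hlt,
        Nat.add_mul_mod_self_left, Nat.mod_eq_of_lt hr]
    · have h6 : s * k + s ≤ s * (g / s) := by
        calc s * k + s = s * (k + 1) := by ring
        _ ≤ s * (g / s) := Nat.mul_le_mul_left s (by omega)
      have hlt : r + s * k < g := by omega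
      rw [ZMod.val_natCast, Nat.mod_eq_of_lt hlt]

lemma sort_cosetFin {g s r : ℕ} [NeZero g] (hg : 0 < g) (hs : 0 < s) (hsg : s ∣ g)
    (hr : r < s) :
    ((cosetFin g s r).val.map ZMod.val).sort (· ≤ ·)
      = List.map (fun k => r + s * k) (List.range (g / s)) := by
  have h1 : (cosetFin g s r).val.map ZMod.val = ((cosetFin g s r).image ZMod.val).val :=
    (Finset.image_val_of_injOn ((ZMod.val_injective g).injOn)).symm
  have h2 : ((Finset.range (g / s)).image (fun k => r + s * k)).val
      = (Multiset.range (g / s)).map (fun k => r + s * k) := by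
    apply Finset.image_val_of_injOn
    intro a _ b _ hab
    simp only at hab
    have := Nat.eq_of_mul_eq_mul_left hs (show s * a = s * b by omega)
    omega
  have h3 : (cosetFin g s r).val.map ZMod.val
      = ↑(List.map (fun k => r + s * k) (List.range (g / s))) := by
    rw [h1, cosetFin_image_val hg hs hsg hr, h2]
    rfl
  rw [h3]
  refine List.Perm.eq_of_pairwise' (Multiset.pairwise_sort _ _) ?_
    (Multiset.coe_eq_coe.mp (Multiset.sort_eq _ _))
  apply List.Pairwise.map
  · intro a b (hab : a < b)
    have : s * a ≤ s * b := Nat.mul_le_mul_left s hab.le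
    omega
  · exact List.pairwise_lt_range

lemma cyclic_bound {g s r : ℕ} [NeZero g] (hg : 0 < g) (hs : 0 < s) (hsg : s ∣ g)
    (hr : r < s) {i : ℕ} (hi1 : 1 ≤ i) (hi2 : i ≤ g / s) :
    ∀ z ∈ cyclicDiffs g i (cosetFin g s r), i * s ≤ z := by
  intro z hz
  set m := g / s with hm
  have hsm : s * m = g := Nat.mul_div_cancel' hsg
  rw [cyclicDiffs] at hz
  simp only [sort_cosetFin hg hs hsg hr] at hz
  rw [Multiset.mem_map] at hz
  obtain ⟨k, hk, hzk⟩ := hz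
  rw [Multiset.mem_range, List.length_map, List.length_range] at hk
  have hlen : (List.map (fun k => r + s * k) (List.range m)).length = m := by
    rw [List.length_map, List.length_range]
  have hget : ∀ k' < m, (List.map (fun k => r + s * k) (List.range m)).getD k' 0
      = r + s * k' := by
    intro k' hk'
    rw [List.getD_eq_getElem _ _ (by rw [hlen]; exact hk')]
    simp
  rw [hlen] at hzk
  have hmod : (k + i) % m < m := Nat.mod_lt _ (by omega)
  rw [hget _ hmod, hget _ hk] at hzk
  -- compute the numerator
  have hnum : (r + s * ((k + i) % m) + g - (r + s * k)) % g = (s * i) % g := by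
    rcases Nat.lt_or_ge (k + i) m with hlt | hge
    · rw [Nat.mod_eq_of_lt hlt]
      have h1 : r + s * (k + i) + g - (r + s * k) = s * i + g := by
        have : s * (k + i) = s * k + s * i := by ring
        omega
      rw [h1, Nat.add_mod_right]
    · have hki : (k + i) % m = k + i - m := by
        have h2 : k + i < 2 * m := by omega
        have := Nat.mod_eq_sub_mod hge
        rw [this, Nat.mod_eq_of_lt (by omega)]
      rw [hki]
      have hc : k + i - m + m = k + i := by omega
      have hprod : s * (k + i - m) + s * m = s * k + s * i := by
        have : s * ((k + i - m) + m) = s * (k + i) := by rw [hc]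
        have h4 : s * ((k + i - m) + m) = s * (k + i - m) + s * m := by ring
        have h5 : s * (k + i) = s * k + s * i := by ring
        omega
      have h1 : r + s * (k + i - m) + g - (r + s * k) = s * i := by omega
      rw [h1]
  rw [hnum] at hzk
  have hsi_pos : 0 < s * i := by positivity
  have hsi_le : s * i ≤ g := by
    calc s * i ≤ s * m := Nat.mul_le_mul_left s hi2
    _ = g := hsm
  rcases Nat.lt_or_ge (s * i) g with hlt | hge
  · rw [Nat.mod_eq_of_lt hlt] at hzk
    have : ¬ (s * i = 0) := by omega
    rw [if_neg this] at hzk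
    have hcomm : i * s = s * i := Nat.mul_comm i s
    omega
  · have hsg' : s * i = g := by omega
    rw [hsg', Nat.mod_self] at hzk
    rw [if_pos rfl] at hzk
    have hcomm : i * s = s * i := Nat.mul_comm i s
    omega

lemma cyclicDiffs_empty {g i : ℕ} : cyclicDiffs g i (∅ : Finset (ZMod g)) = 0 := by
  simp [cyclicDiffs]

/-- Summing counts of coset translates equals counting representatives. -/
lemma sum_count_phi {g s : ℕ} (hg : 0 < g) (hs : 0 < s) (hsg : s ∣ g)
    (T : Multiset (ZMod g)) (x : ZMod g) :
    (∑ t : Fin (g / s), T.count (x - ((s * (t : ℕ) : ℕ) : ZMod g)))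
      = Multiset.countP (fun b => inSub g s (x - b)) T := by
  induction T using Multiset.induction_on with
  | empty => simp
  | cons b T ih =>
    simp only [Multiset.count_cons, Multiset.countP_cons, Finset.sum_add_distrib, ih]
    congr 1
    by_cases h : inSub g s (x - b)
    · obtain ⟨t0, ht0, heq⟩ := (inSub_iff hg hs hsg _).mp h
      rw [if_pos h]
      rw [Finset.sum_eq_single (⟨t0, ht0⟩ : Fin (g / s))]
      · rw [if_pos]
        have : x - (x - b) = b := by ring
        rw [← this, heq]
      · intro t _ hne
        rw [if_neg]
        intro hcon
        have : x - b = ((s * (t : ℕ) : ℕ) : ZMod g) := by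
          rw [← hcon]; ring
        apply hne
        exact Fin.ext (phi_inj hg hs hsg t.isLt ht0 (this ▸ heq ▸ rfl))
      · intro hcon
        exact absurd (Finset.mem_univ _) hcon
    · rw [if_neg h]
      apply Finset.sum_eq_zero
      intro t _
      rw [if_neg]
      intro hcon
      apply h
      have : x - b = ((s * (t : ℕ) : ℕ) : ZMod g) := by rw [← hcon]; ring
      rw [this]
      exact inSub_phi _

/-- If a difference multiset has count at most one at `x`, any two witnesses agree. -/
lemma unique_of_count_le_one {α β : Type*} [DecidableEq β] [DecidableEq α] {u : ℕ}
    (t : Fin u → Finset α) (f : α → β) (x : β)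
    (h : (∑ i : Fin u, (t i).val.map f).count x ≤ 1)
    {i i' : Fin u} {a a' : α} (ha : a ∈ t i) (hfa : f a = x)
    (ha' : a' ∈ t i') (hfa' : f a' = x) : i = i' ∧ a = a' := by
  classical
  rw [Multiset.count_sum'] at h
  have key : ∀ κ : Fin u, ((t κ).val.map f).count x
      = Multiset.card ((t κ).val.filter (fun b => x = f b)) := fun κ =>
    Multiset.count_map _ _ _
  have h1 : 1 ≤ ((t i).val.map f).count x := by
    rw [key]
    have : a ∈ (t i).val.filter (fun b => x = f b) := by
      rw [Multiset.mem_filter]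
      exact ⟨ha, hfa.symm⟩
    exact Multiset.card_pos_iff_exists_mem.mpr ⟨a, this⟩
  have h1' : 1 ≤ ((t i').val.map f).count x := by
    rw [key]
    have : a' ∈ (t i').val.filter (fun b => x = f b) := by
      rw [Multiset.mem_filter]
      exact ⟨ha', hfa'.symm⟩
    exact Multiset.card_pos_iff_exists_mem.mpr ⟨a', this⟩
  by_cases hii : i = i'
  · subst hii
    refine ⟨rfl, ?_⟩
    by_contra hne
    have h2 : 2 ≤ ((t i).val.map f).count x := by
      rw [key]
      have hsub : ({a, a'} : Finset α) ⊆ (t i).filter (fun b => x = f b) := by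
        intro y hy
        rw [Finset.mem_insert, Finset.mem_singleton] at hy
        rcases hy with rfl | rfl
        · exact Finset.mem_filter.mpr ⟨ha, hfa.symm⟩
        · exact Finset.mem_filter.mpr ⟨ha', hfa'.symm⟩
      have := Finset.card_le_card hsub
      rw [Finset.card_pair hne] at this
      rw [← Finset.filter_val]
      exact this
    have h3 : ((t i).val.map f).count x ≤ ∑ κ : Fin u, ((t κ).val.map f).count x :=
      Finset.single_le_sum (f := fun κ => ((t κ).val.map f).count x)
        (fun κ _ => Nat.zero_le _) (Finset.mem_univ i)
    omega
  · have h4 : ((t i).val.map f).count x + ((t i').val.map f).count x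
        ≤ ∑ κ : Fin u, ((t κ).val.map f).count x := by
      rw [← Finset.sum_pair (f := fun κ => ((t κ).val.map f).count x) hii]
      exact Finset.sum_le_sum_of_subset (fun κ _ => Finset.mem_univ κ)
    omega

lemma tr_product_val {g : ℕ} (A C : Finset (ZMod g)) (c : ZMod g) :
    ((tr c A) ×ˢ (tr c C)).val
      = (A ×ˢ C).val.map (fun p : ZMod g × ZMod g => (p.1 + c, p.2 + c)) := by
  have hinj : Function.Injective (fun p : ZMod g × ZMod g => (p.1 + c, p.2 + c)) := by
    intro p q h
    simp only [Prod.mk.injEq, add_left_inj] at h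
    exact Prod.ext h.1 h.2
  have heq : (tr c A) ×ˢ (tr c C)
      = (A ×ˢ C).map ⟨fun p : ZMod g × ZMod g => (p.1 + c, p.2 + c), hinj⟩ := by
    ext ⟨x, y⟩
    simp only [Finset.mem_product, mem_tr, Finset.mem_map, Function.Embedding.coeFn_mk,
      Prod.mk.injEq]
    constructor
    · rintro ⟨h1, h2⟩
      exact ⟨(x - c, y - c), ⟨h1, h2⟩, by simp, by simp⟩
    · rintro ⟨⟨p1, p2⟩, ⟨hp1, hp2⟩, rfl, rfl⟩
      simp only [add_sub_cancel_right]
      exact ⟨hp1, hp2⟩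
  rw [heq, Finset.map_val]
  rfl

lemma deltaList_tr_count {g : ℕ} (A : Finset (ZMod g)) (c x : ZMod g) :
    ((((tr c A) ×ˢ (tr c A)).filter (fun p => p.1 ≠ p.2)).val.map
        (fun p : ZMod g × ZMod g => p.1 - p.2)).count x
      = (((A ×ˢ A).filter (fun p => p.1 ≠ p.2)).val.map
        (fun p : ZMod g × ZMod g => p.1 - p.2)).count x := by
  classical
  rw [Finset.filter_val, Finset.filter_val, tr_product_val,
    Multiset.filter_map]
  have hfil : Multiset.filter ((fun p : ZMod g × ZMod g => p.1 ≠ p.2) ∘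
        (fun p : ZMod g × ZMod g => (p.1 + c, p.2 + c))) (A ×ˢ A).val
      = Multiset.filter (fun p : ZMod g × ZMod g => p.1 ≠ p.2) (A ×ˢ A).val := by
    apply Multiset.filter_congr
    intro p _
    simp [Function.comp]
  rw [hfil, Multiset.map_map]
  congr 1
  apply Multiset.map_congr rfl
  intro p _
  simp [Function.comp]

lemma deltaE_tr_count {g : ℕ} (A C : Finset (ZMod g)) (c x : ZMod g) :
    (((tr c A) ×ˢ (tr c C)).val.map (fun p : ZMod g × ZMod g => p.2 - p.1)).count x
      = ((A ×ˢ C).val.map (fun p : ZMod g × ZMod g => p.2 - p.1)).count x := by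
  rw [tr_product_val, Multiset.map_map]
  congr 1
  apply Multiset.map_congr rfl
  intro p _
  simp [Function.comp]

end Aux

theorem stmt1 (g s M u : ℕ) (hg : 0 < g) (hs : 0 < s) (hsg : s ∣ g)
    (K : Fin M → Set ℕ) (B : Fin M → Fin u → Finset (ZMod g))
    (hB : IsBNCDP g M u 1 K B)
    (hCSR : ∀ j, IsCSR g s (blockElems (B j))) :
    ∃ D : Fin M → Fin (g * u / s) → Finset (ZMod g),
      (∀ j, IsPartitionType (D j)) ∧
      IsBNCDP g M (g * u / s) (g / s) K D ∧
      ∀ i : ℕ, 1 ≤ i → i ≤ g / s → DBound D i (i * s) := by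
  classical
  haveI : NeZero g := ⟨hg.ne'⟩
  have hsm : s * (g / s) = g := Nat.mul_div_cancel' hsg
  have hm : 0 < g / s := Nat.div_pos (Nat.le_of_dvd hg hsg) hs
  have hN : g * u / s = u * (g / s) := by
    rw [mul_comm g u, Nat.mul_div_assoc u hsg]
  let e : Fin (g * u / s) ≃ Fin u × Fin (g / s) :=
    (finCongr hN).trans finProdFinEquiv.symm
  set D : Fin M → Fin (g * u / s) → Finset (ZMod g) :=
    fun j k => tr ((s * (((e k).2 : Fin (g / s)) : ℕ) : ℕ) : ZMod g) (B j (e k).1) with hD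
  -- the main counting identity
  have hcount : ∀ (j : Fin M) (x : ZMod g),
      (∑ k : Fin (g * u / s), (D j k).val).count x = 1 := by
    intro j x
    rw [Multiset.count_sum']
    have h1 : ∀ k : Fin (g * u / s), ((D j k).val).count x
        = (B j (e k).1).val.count (x - ((s * (((e k).2 : Fin (g / s)) : ℕ) : ℕ) : ZMod g)) := by
      intro k
      rw [hD, tr_val]
      exact count_map_addRight _ _ _
    simp only [h1]
    rw [Equiv.sum_comp e (fun p : Fin u × Fin (g / s) =>
      (B j p.1).val.count (x - ((s * ((p.2 : Fin (g / s)) : ℕ) : ℕ) : ZMod g)))]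
    rw [Fintype.sum_prod_type, Finset.sum_comm]
    have h3 : ∀ t : Fin (g / s),
        (∑ i : Fin u, (B j i).val.count (x - ((s * (t : ℕ) : ℕ) : ZMod g)))
        = (blockElems (B j)).count (x - ((s * (t : ℕ) : ℕ) : ZMod g)) := by
      intro t
      rw [blockElems, Multiset.count_sum']
    simp only [h3]
    rw [sum_count_phi hg hs hsg, Multiset.countP_eq_card_filter]
    exact hCSR j x
  refine ⟨D, ?_, ?_, ?_⟩
  · -- partition type
    intro j
    constructor
    · intro k k' hkk
      rw [Finset.disjoint_left]
      intro x hx hx'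
      have hc := hcount j x
      rw [Multiset.count_sum'] at hc
      have e1 : 1 ≤ (D j k).val.count x :=
        Multiset.one_le_count_iff_mem.mpr (Finset.mem_val.mpr hx)
      have e2 : 1 ≤ (D j k').val.count x :=
        Multiset.one_le_count_iff_mem.mpr (Finset.mem_val.mpr hx')
      have h4 : (D j k).val.count x + (D j k').val.count x
          ≤ ∑ κ : Fin (g * u / s), (D j κ).val.count x := by
        rw [← Finset.sum_pair (f := fun κ => (D j κ).val.count x) hkk]
        exact Finset.sum_le_sum_of_subset (fun κ _ => Finset.mem_univ κ)
      omega
    · intro x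
      have hc := hcount j x
      by_contra hex
      push_neg at hex
      have hz : ∀ k, (D j k).val.count x = 0 := fun k =>
        Multiset.count_eq_zero.mpr (fun h => hex k (Finset.mem_val.mp h))
      rw [Multiset.count_sum'] at hc
      simp only [hz, Finset.sum_const_zero] at hc
      omega
  · -- BNCDP property
    constructor
    · intro j
      constructor
      · intro k
        have : (D j k).card = (B j (e k).1).card := by
          rw [hD]; exact tr_card _ _
        rw [this]
        exact (hB.1 j).1 (e k).1
      · intro x hx
        have hDL : (deltaList (D j)).count x = (g / s) * (deltaList (B j)).count x := by
          rw [deltaList, Multiset.count_sum']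
          have h1 : ∀ k : Fin (g * u / s),
              ((((D j k) ×ˢ (D j k)).filter (fun p => p.1 ≠ p.2)).val.map
                (fun p => p.1 - p.2)).count x
              = ((((B j (e k).1) ×ˢ (B j (e k).1)).filter (fun p => p.1 ≠ p.2)).val.map
                (fun p => p.1 - p.2)).count x := by
            intro k
            rw [hD]
            exact deltaList_tr_count _ _ _
          simp only [h1]
          rw [Equiv.sum_comp e (fun p : Fin u × Fin (g / s) =>
            ((((B j p.1) ×ˢ (B j p.1)).filter (fun q => q.1 ≠ q.2)).val.map
              (fun q => q.1 - q.2)).count x)]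
          rw [Fintype.sum_prod_type, Finset.sum_comm]
          show (∑ _t : Fin (g / s), ∑ i' : Fin u,
              ((((B j i') ×ˢ (B j i')).filter (fun q => q.1 ≠ q.2)).val.map
                (fun q => q.1 - q.2)).count x) = g / s * (deltaList (B j)).count x
          rw [show (∑ i' : Fin u,
              ((((B j i') ×ˢ (B j i')).filter (fun q => q.1 ≠ q.2)).val.map
                (fun q => q.1 - q.2)).count x) = (deltaList (B j)).count x from by
            rw [deltaList, Multiset.count_sum']]
          rw [Finset.sum_const, Finset.card_univ, Fintype.card_fin, smul_eq_mul]
        rw [hDL]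
        have hb := (hB.1 j).2 x hx
        calc (g / s) * (deltaList (B j)).count x ≤ (g / s) * 1 :=
              Nat.mul_le_mul_left _ hb
        _ = g / s := Nat.mul_one _
    · intro j j' hjj x
      have hDE : (deltaE (D j) (D j')).count x = (g / s) * (deltaE (B j) (B j')).count x := by
        rw [deltaE, Multiset.count_sum']
        have h1 : ∀ k : Fin (g * u / s),
            (((D j k) ×ˢ (D j' k)).val.map (fun p => p.2 - p.1)).count x
            = (((B j (e k).1) ×ˢ (B j' (e k).1)).val.map (fun p => p.2 - p.1)).count x := by
          intro k
          rw [hD]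
          exact deltaE_tr_count _ _ _ _
        simp only [h1]
        rw [Equiv.sum_comp e (fun p : Fin u × Fin (g / s) =>
          (((B j p.1) ×ˢ (B j' p.1)).val.map (fun q => q.2 - q.1)).count x)]
        rw [Fintype.sum_prod_type, Finset.sum_comm]
        show (∑ _t : Fin (g / s), ∑ i' : Fin u,
            (((B j i') ×ˢ (B j' i')).val.map
              (fun q => q.2 - q.1)).count x) = g / s * (deltaE (B j) (B j')).count x
        rw [show (∑ i' : Fin u,
            (((B j i') ×ˢ (B j' i')).val.map
              (fun q => q.2 - q.1)).count x) = (deltaE (B j) (B j')).count x from by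
          rw [deltaE, Multiset.count_sum']]
        rw [Finset.sum_const, Finset.card_univ, Fintype.card_fin, smul_eq_mul]
      rw [hDE]
      have hb := hB.2 j j' hjj x
      calc (g / s) * (deltaE (B j) (B j')).count x ≤ (g / s) * 1 :=
            Nat.mul_le_mul_left _ hb
      _ = g / s := Nat.mul_one _
  · -- DBound
    intro i hi1 hi2
    constructor
    · calc i * s ≤ (g / s) * s := Nat.mul_le_mul_right s hi2
      _ = g := by rw [mul_comm]; exact hsm
    · intro j j' τ hjj z hz
      by_cases hexx : ∃ (i₀ : Fin u) (b b' : ZMod g),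
          b ∈ B j i₀ ∧ b' ∈ B j' i₀ ∧ b' - b = τ
      · obtain ⟨i₀, b₀, b₀', hb₀, hb₀', hτ₀⟩ := hexx
        have huniq : ∀ (i₁ : Fin u) (c c' : ZMod g), c ∈ B j i₁ → c' ∈ B j' i₁ →
            c' - c = τ → i₁ = i₀ ∧ c = b₀ ∧ c' = b₀' := by
          intro i₁ c c' hc hc' hcc
          by_cases hjeq : j = j'
          · subst hjeq
            have hτne : τ ≠ 0 := hjj rfl
            have hcount1 := (hB.1 j).2 τ hτne
            rw [deltaList] at hcount1
            have hne1 : c' ≠ c := by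
              intro hEq; apply hτne; rw [← hcc, hEq, sub_self]
            have hne2 : b₀' ≠ b₀ := by
              intro hEq; apply hτne; rw [← hτ₀, hEq, sub_self]
            have hres := unique_of_count_le_one
              (fun κ => ((B j κ) ×ˢ (B j κ)).filter (fun p => p.1 ≠ p.2))
              (fun p => p.1 - p.2) τ hcount1
              (i := i₁) (i' := i₀) (a := (c', c)) (a' := (b₀', b₀))
              (Finset.mem_filter.mpr ⟨Finset.mem_product.mpr ⟨hc', hc⟩, hne1⟩) hcc
              (Finset.mem_filter.mpr ⟨Finset.mem_product.mpr ⟨hb₀', hb₀⟩, hne2⟩) hτ₀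
            exact ⟨hres.1, congrArg Prod.snd hres.2, congrArg Prod.fst hres.2⟩
          · have hcount1 := hB.2 j j' hjeq τ
            rw [deltaE] at hcount1
            have hres := unique_of_count_le_one
              (fun κ => (B j κ) ×ˢ (B j' κ))
              (fun p => p.2 - p.1) τ hcount1
              (i := i₁) (i' := i₀) (a := (c, c')) (a' := (b₀, b₀'))
              (Finset.mem_product.mpr ⟨hc, hc'⟩) hcc
              (Finset.mem_product.mpr ⟨hb₀, hb₀'⟩) hτ₀
            exact ⟨hres.1, congrArg Prod.fst hres.2, congrArg Prod.snd hres.2⟩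
        have hbsum : b₀ + τ = b₀' := by rw [← hτ₀]; ring
        have hDSet : DSet D j j' τ
            = Finset.image (fun t : Fin (g / s) => b₀ + ((s * (t : ℕ) : ℕ) : ZMod g))
              Finset.univ := by
          ext x
          simp only [DSet, Finset.mem_biUnion, Finset.mem_filter, Finset.mem_univ, true_and,
            Finset.mem_image]
          constructor
          · rintro ⟨k, hx1, hx2⟩
            rw [hD] at hx1 hx2
            have hx1' := mem_tr.mp hx1
            have hx2' := mem_tr.mp hx2
            have hsub : (x + τ - ((s * (((e k).2 : Fin (g / s)) : ℕ) : ℕ) : ZMod g))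
                - (x - ((s * (((e k).2 : Fin (g / s)) : ℕ) : ℕ) : ZMod g)) = τ := by ring
            obtain ⟨-, hceq, -⟩ := huniq _ _ _ hx1' hx2' hsub
            exact ⟨(e k).2, by rw [← hceq]; ring⟩
          · rintro ⟨t, rfl⟩
            refine ⟨e.symm (i₀, t), ?_, ?_⟩
            · rw [hD]
              apply mem_tr.mpr
              rw [Equiv.apply_symm_apply]
              simpa using hb₀
            · rw [hD]
              apply mem_tr.mpr
              rw [Equiv.apply_symm_apply]
              have heq2 : b₀ + ((s * (t : ℕ) : ℕ) : ZMod g) + τ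
                  - ((s * (t : ℕ) : ℕ) : ZMod g) = b₀ + τ := by ring
              rw [heq2, hbsum]
              exact hb₀'
        rw [hDSet, image_add_phi hg hs hsg b₀] at hz
        exact cyclic_bound hg hs hsg (Nat.mod_lt _ hs) hi1 hi2 z hz
      · have hDSet : DSet D j j' τ = ∅ := by
          rw [Finset.eq_empty_iff_forall_notMem]
          intro x hx
          simp only [DSet, Finset.mem_biUnion, Finset.mem_filter, Finset.mem_univ,
            true_and] at hx
          obtain ⟨k, hx1, hx2⟩ := hx
          rw [hD] at hx1 hx2
          refine hexx ⟨(e k).1, x - ((s * (((e k).2 : Fin (g / s)) : ℕ) : ℕ) : ZMod g),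
            x + τ - ((s * (((e k).2 : Fin (g / s)) : ℕ) : ℕ) : ZMod g),
            mem_tr.mp hx1, mem_tr.mp hx2, by ring⟩
        rw [hDSet, cyclicDiffs_empty] at hz
        exact absurd hz (Multiset.notMem_zero z)
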